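/- arXiv:1708.04914 — 3 statements merged into one kernel-verified Lean document; each statement's English description precedes it below -/
import Mathlib

section
/- The continuous binomial coefficient B(t,s) := {t+s brace s} = 2∑_{n=0}^∞ sⁿtⁿ/(n!)² + (t+s)∑_{n=0}^∞ sⁿtⁿ/((n+1)!n!) satisfies the partial differential equation ∂²B/∂t∂s = B for all s, t ∈ ℂ (or ℝ). -/
open scoped Nat

noncomputable def pser (c : ℕ → ℂ) (x : ℂ) : ℂ := ∑' n : ℕ, c n * x ^ n

lemma summable_pser {c : ℕ → ℂ} (hc : ∀ n, ‖c n‖ ≤ ((n ! : ℝ))⁻¹) (x : ℂ) :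
    Summable (fun n => c n * x ^ n) := by
  apply Summable.of_norm
  apply Summable.of_nonneg_of_le (fun n => norm_nonneg _) (fun n => ?_)
    (Real.summable_pow_div_factorial ‖x‖)
  rw [norm_mul, norm_pow]
  calc ‖c n‖ * ‖x‖ ^ n ≤ (n ! : ℝ)⁻¹ * ‖x‖ ^ n := by
        gcongr; exact hc n
    _ = ‖x‖ ^ n / n ! := by ring

lemma hasDerivAt_pser {c : ℕ → ℂ} (hc : ∀ n, ‖c n‖ ≤ ((n ! : ℝ))⁻¹) (x : ℂ) :
    HasDerivAt (pser c) (pser (fun n => ((n : ℂ) + 1) * c (n + 1)) x) x := by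
  set R : ℝ := ‖x‖ + 1 with hR
  have hR1 : 1 ≤ R := by rw [hR]; linarith [norm_nonneg x]
  have hball : x ∈ Metric.ball (0 : ℂ) R := by
    rw [Metric.mem_ball, dist_zero_right, hR]; linarith [norm_nonneg x]
  have bound : ∀ n : ℕ, ∀ y ∈ Metric.ball (0 : ℂ) R,
      ‖c n * ((n : ℂ) * y ^ (n - 1))‖ ≤ (2 * R) ^ n / n ! := by
    intro n y hy
    have hyR : ‖y‖ ≤ R := by
      rw [Metric.mem_ball, dist_zero_right] at hy; linarith
    have hy0 : (0:ℝ) ≤ ‖y‖ := norm_nonneg y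
    have h1 : ‖c n * ((n : ℂ) * y ^ (n - 1))‖ = ‖c n‖ * ((n : ℝ) * ‖y‖ ^ (n - 1)) := by
      simp [norm_mul, norm_pow]
    rw [h1]
    have h2 : (n : ℝ) ≤ 2 ^ n := by exact_mod_cast (Nat.lt_two_pow_self (n := n)).le
    have h3 : ‖y‖ ^ (n - 1) ≤ R ^ n := by
      calc ‖y‖ ^ (n - 1) ≤ R ^ (n - 1) := by gcongr <;> linarith
        _ ≤ R ^ n := pow_le_pow_right₀ hR1 (Nat.sub_le n 1)
    calc ‖c n‖ * ((n : ℝ) * ‖y‖ ^ (n - 1)) ≤ (n ! : ℝ)⁻¹ * (2 ^ n * R ^ n) := by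
          have h4 := hc n
          gcongr <;> first | positivity | assumption
        _ = (2 * R) ^ n / n ! := by rw [mul_pow]; ring
  have hsum2R : Summable (fun n : ℕ => (2 * R) ^ n / n !) :=
    Real.summable_pow_div_factorial (2 * R)
  have key : HasDerivAt (pser c) (∑' n : ℕ, c n * ((n : ℂ) * x ^ (n - 1))) x := by
    apply hasDerivAt_tsum_of_isPreconnected hsum2R Metric.isOpen_ball
      ((convex_ball (0:ℂ) R).isPreconnected)
      (fun n y _ => (hasDerivAt_pow n y).const_mul (c n))
      (fun n y hy => bound n y hy)
      (Metric.mem_ball_self (by linarith) : (0:ℂ) ∈ Metric.ball (0:ℂ) R)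
      (summable_pser hc 0) hball
  have hsd : Summable (fun n : ℕ => c n * ((n : ℂ) * x ^ (n - 1))) :=
    Summable.of_norm (hsum2R.of_nonneg_of_le (fun n => norm_nonneg _)
      (fun n => bound n x hball))
  have : (∑' n : ℕ, c n * ((n : ℂ) * x ^ (n - 1)))
      = pser (fun n => ((n : ℂ) + 1) * c (n + 1)) x := by
    rw [Summable.tsum_eq_zero_add hsd]
    simp only [pser]
    rw [show (c 0 * ((0:ℕ) * x ^ (0 - 1) : ℂ)) = 0 by push_cast; ring]
    rw [zero_add]
    apply tsum_congr
    intro n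
    push_cast
    ring
  rwa [this] at key

noncomputable def c0 (n : ℕ) : ℂ := ((n ! : ℂ) ^ 2)⁻¹
noncomputable def c1 (n : ℕ) : ℂ := (((n + 1)! : ℂ) * (n ! : ℂ))⁻¹
noncomputable def c2 (n : ℕ) : ℂ := (((n + 2)! : ℂ) * (n ! : ℂ))⁻¹
noncomputable def c3 (n : ℕ) : ℂ := (((n + 3)! : ℂ) * (n ! : ℂ))⁻¹

lemma fact_le_fact_mul (a b : ℕ) (h : b ≤ a) : (b ! : ℝ) ≤ (a ! : ℝ) * (b ! : ℝ) := by
  have h1 : (1 : ℝ) ≤ (a ! : ℝ) := by exact_mod_cast Nat.one_le_iff_ne_zero.2 a.factorial_ne_zero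
  nlinarith [show (0:ℝ) < (b ! : ℝ) by positivity]

lemma norm_inv_bound {m : ℕ} (n : ℕ) (hle : (n ! : ℝ) ≤ m) (hm : 0 < m) :
    ‖((m : ℂ))⁻¹‖ ≤ ((n ! : ℝ))⁻¹ := by
  rw [norm_inv, Complex.norm_natCast]
  exact inv_anti₀ (by positivity) hle

lemma hc0 : ∀ n, ‖c0 n‖ ≤ ((n ! : ℝ))⁻¹ := by
  intro n
  rw [c0, show ((n ! : ℂ)^2) = ((n ! * n ! : ℕ) : ℂ) by push_cast; ring]
  exact norm_inv_bound n (by push_cast; nlinarith [fact_le_fact_mul n n le_rfl]) (by positivity)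

lemma hc1 : ∀ n, ‖c1 n‖ ≤ ((n ! : ℝ))⁻¹ := by
  intro n
  rw [c1, show ((n+1)! : ℂ) * (n ! : ℂ) = (((n+1)! * n ! : ℕ) : ℂ) by push_cast; ring]
  exact norm_inv_bound n (by push_cast; nlinarith [fact_le_fact_mul (n+1) n n.le_succ]) (by positivity)

lemma hc2 : ∀ n, ‖c2 n‖ ≤ ((n ! : ℝ))⁻¹ := by
  intro n
  rw [c2, show ((n+2)! : ℂ) * (n ! : ℂ) = (((n+2)! * n ! : ℕ) : ℂ) by push_cast; ring]
  exact norm_inv_bound n (by push_cast; nlinarith [fact_le_fact_mul (n+2) n (by omega)]) (by positivity)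

lemma hc3 : ∀ n, ‖c3 n‖ ≤ ((n ! : ℝ))⁻¹ := by
  intro n
  rw [c3, show ((n+3)! : ℂ) * (n ! : ℂ) = (((n+3)! * n ! : ℕ) : ℂ) by push_cast; ring]
  exact norm_inv_bound n (by push_cast; nlinarith [fact_le_fact_mul (n+3) n (by omega)]) (by positivity)

lemma factC_ne (m : ℕ) : ((m ! : ℂ)) ≠ 0 := Nat.cast_ne_zero.2 m.factorial_ne_zero

lemma e01 (n : ℕ) : ((n : ℂ) + 1) * c0 (n + 1) = c1 n := by
  rw [c0, c1]
  have h1 := factC_ne n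
  have h2 := factC_ne (n + 1)
  field_simp
  rw [show (n+1)! = (n+1) * n ! from Nat.factorial_succ n]
  push_cast
  ring

lemma e12 (n : ℕ) : ((n : ℂ) + 1) * c1 (n + 1) = c2 n := by
  rw [c1, c2]
  have h1 := factC_ne n
  have h2 := factC_ne (n + 1)
  have h3 := factC_ne (n + 2)
  field_simp
  rw [show (n+1)! = (n+1) * n ! from Nat.factorial_succ n]
  push_cast
  ring

lemma e23 (n : ℕ) : ((n : ℂ) + 1) * c2 (n + 1) = c3 n := by
  rw [c2, c3]
  have h1 := factC_ne n
  have h2 := factC_ne (n + 1)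
  have h3 := factC_ne (n + 3)
  field_simp
  rw [show (n+1)! = (n+1) * n ! from Nat.factorial_succ n]
  push_cast
  ring

lemma i1c (n : ℕ) : c2 n + c1 (n + 1) = c0 (n + 1) := by
  rw [c0, c1, c2]
  simp only [show n+1+1 = n+2 from by omega]
  have h1 := factC_ne n
  have h2 := factC_ne (n + 1)
  have h3 := factC_ne (n + 2)
  have h4 := factC_ne (n + 1 + 1)
  field_simp
  rw [show (n+2)! = (n+2) * (n+1)! from Nat.factorial_succ (n+1),
    show (n+1)! = (n+1) * n ! from Nat.factorial_succ n]
  push_cast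
  ring

lemma i2c (n : ℕ) : c3 n + 2 * c2 (n + 1) = c1 (n + 1) := by
  rw [c1, c2, c3]
  simp only [show n+1+1 = n+2 from by omega, show n+1+2 = n+3 from by omega]
  have h1 := factC_ne n
  have h2 := factC_ne (n + 1)
  have h3 := factC_ne (n + 3)
  have h4 := factC_ne (n + 1 + 2)
  have h5 := factC_ne (n + 1 + 1)
  field_simp
  rw [show (n+3)! = (n+3) * (n+2)! from Nat.factorial_succ (n+2),
    show (n+2)! = (n+2) * (n+1)! from Nat.factorial_succ (n+1),
    show (n+1)! = (n+1) * n ! from Nat.factorial_succ n]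
  push_cast
  ring

lemma I1 (x : ℂ) : x * pser c2 x + pser c1 x = pser c0 x := by
  have s0 := summable_pser hc0 x
  have s1 := summable_pser hc1 x
  have s2 := summable_pser hc2 x
  have s1' : Summable (fun n : ℕ => c1 (n+1) * x ^ (n+1)) := s1.comp_injective (add_left_injective 1)
  have s2' : Summable (fun n : ℕ => c2 n * x ^ (n+1)) := (s2.mul_right x).congr (fun n => by ring)
  have hA : pser c0 x = c0 0 + ∑' n : ℕ, c0 (n+1) * x ^ (n+1) := by
    rw [pser, Summable.tsum_eq_zero_add s0]; simp
  have hC : pser c1 x = c1 0 + ∑' n : ℕ, c1 (n+1) * x ^ (n+1) := by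
    rw [pser, Summable.tsum_eq_zero_add s1]; simp
  have hxD : x * pser c2 x = ∑' n : ℕ, c2 n * x ^ (n+1) := by
    rw [pser, ← tsum_mul_left]; exact tsum_congr fun n => by ring
  have hmerge : (∑' n : ℕ, c2 n * x ^ (n+1)) + (∑' n : ℕ, c1 (n+1) * x ^ (n+1))
      = ∑' n : ℕ, c0 (n+1) * x ^ (n+1) := by
    rw [← Summable.tsum_add s2' s1']
    exact tsum_congr fun n => by linear_combination x ^ (n+1) * i1c n
  have hcst : c1 0 = c0 0 := by simp [c0, c1]
  rw [hxD, hA, hC]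
  linear_combination hmerge + hcst

lemma I2 (x : ℂ) : x * pser c3 x + 2 * pser c2 x = pser c1 x := by
  have s1 := summable_pser hc1 x
  have s2 := summable_pser hc2 x
  have s3 := summable_pser hc3 x
  have s1' : Summable (fun n : ℕ => c1 (n+1) * x ^ (n+1)) := s1.comp_injective (add_left_injective 1)
  have s2' : Summable (fun n : ℕ => c2 (n+1) * x ^ (n+1)) := s2.comp_injective (add_left_injective 1)
  have s3' : Summable (fun n : ℕ => c3 n * x ^ (n+1)) := (s3.mul_right x).congr (fun n => by ring)
  have hC : pser c1 x = c1 0 + ∑' n : ℕ, c1 (n+1) * x ^ (n+1) := by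
    rw [pser, Summable.tsum_eq_zero_add s1]; simp
  have hD : pser c2 x = c2 0 + ∑' n : ℕ, c2 (n+1) * x ^ (n+1) := by
    rw [pser, Summable.tsum_eq_zero_add s2]; simp
  have hxE : x * pser c3 x = ∑' n : ℕ, c3 n * x ^ (n+1) := by
    rw [pser, ← tsum_mul_left]; exact tsum_congr fun n => by ring
  have hmerge : (∑' n : ℕ, c3 n * x ^ (n+1)) + 2 * (∑' n : ℕ, c2 (n+1) * x ^ (n+1))
      = ∑' n : ℕ, c1 (n+1) * x ^ (n+1) := by
    rw [← tsum_mul_left, ← Summable.tsum_add s3' (s2'.mul_left 2)]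
    exact tsum_congr fun n => by linear_combination x ^ (n+1) * i2c n
  have hcst : 2 * c2 0 = c1 0 := by
    rw [c1, c2]; norm_num [Nat.factorial]
  rw [hxE, hC, hD]
  linear_combination hmerge + hcst

/-- The continuous binomial coefficient `{t brace a}`. -/
noncomputable def contBinom (t a : ℂ) : ℂ :=
  2 * ∑' n : ℕ, a ^ n * (t - a) ^ n / ((Nat.factorial n : ℂ) ^ 2) +
    t * ∑' n : ℕ, a ^ n * (t - a) ^ n / ((Nat.factorial (n + 1) : ℂ) * (Nat.factorial n : ℂ))

lemma contBinom_eq (t s : ℂ) :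
    contBinom (t + s) s = 2 * pser c0 (t * s) + (t + s) * pser c1 (t * s) := by
  rw [contBinom, pser, pser]
  congr 1
  · congr 1
    apply tsum_congr
    intro n
    rw [add_sub_cancel_right, c0]
    ring
  · congr 1
    apply tsum_congr
    intro n
    rw [add_sub_cancel_right, c1]
    ring

lemma HA (x : ℂ) : HasDerivAt (pser c0) (pser c1 x) x := by
  have h := hasDerivAt_pser hc0 x
  rwa [show pser (fun n => ((n : ℂ) + 1) * c0 (n + 1)) x = pser c1 x from
    tsum_congr fun n => by beta_reduce; rw [e01 n]] at h

lemma HC (x : ℂ) : HasDerivAt (pser c1) (pser c2 x) x := by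
  have h := hasDerivAt_pser hc1 x
  rwa [show pser (fun n => ((n : ℂ) + 1) * c1 (n + 1)) x = pser c2 x from
    tsum_congr fun n => by beta_reduce; rw [e12 n]] at h

lemma HD (x : ℂ) : HasDerivAt (pser c2) (pser c3 x) x := by
  have h := hasDerivAt_pser hc2 x
  rwa [show pser (fun n => ((n : ℂ) + 1) * c2 (n + 1)) x = pser c3 x from
    tsum_congr fun n => by beta_reduce; rw [e23 n]] at h

lemma inner_deriv (t' s : ℂ) :
    deriv (fun s' : ℂ => contBinom (t' + s') s') s
      = 2 * t' * pser c1 (t' * s) + pser c1 (t' * s) + (t' + s) * t' * pser c2 (t' * s) := by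
  have hrw : (fun s' : ℂ => contBinom (t' + s') s')
      = fun s' : ℂ => 2 * pser c0 (t' * s') + (t' + s') * pser c1 (t' * s') :=
    funext fun s' => contBinom_eq t' s'
  have h1 : HasDerivAt (fun s' : ℂ => t' * s') t' s := by
    simpa using (hasDerivAt_id s).const_mul t'
  have hA' : HasDerivAt (fun s' : ℂ => pser c0 (t' * s')) (pser c1 (t' * s) * t') s :=
    (HA (t' * s)).comp s h1
  have hC' : HasDerivAt (fun s' : ℂ => pser c1 (t' * s')) (pser c2 (t' * s) * t') s :=
    (HC (t' * s)).comp s h1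
  have hfull : HasDerivAt
      (fun s' : ℂ => 2 * pser c0 (t' * s') + (t' + s') * pser c1 (t' * s'))
      (2 * (pser c1 (t' * s) * t') + (1 * pser c1 (t' * s) + (t' + s) * (pser c2 (t' * s) * t'))) s :=
    (hA'.const_mul 2).add (((hasDerivAt_id s).const_add t').mul hC')
  rw [hrw, hfull.deriv]
  ring

/-- `B(t,s) = {t+s brace s}` satisfies `∂²B/∂t∂s = B`. -/
theorem contBinom_pde (s t : ℂ) :
    deriv (fun t' : ℂ => deriv (fun s' : ℂ => contBinom (t' + s') s') s) t =
      contBinom (t + s) s := by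
  have hrw : (fun t' : ℂ => deriv (fun s' : ℂ => contBinom (t' + s') s') s)
      = fun t' : ℂ => 2 * t' * pser c1 (t' * s) + pser c1 (t' * s)
          + (t' + s) * t' * pser c2 (t' * s) :=
    funext fun t' => inner_deriv t' s
  have h1 : HasDerivAt (fun t' : ℂ => t' * s) s t := by
    simpa using (hasDerivAt_id t).mul_const s
  have hC' : HasDerivAt (fun t' : ℂ => pser c1 (t' * s)) (pser c2 (t * s) * s) t :=
    by have h := (HC (t * s)).comp t h1; exact h
  have hD' : HasDerivAt (fun t' : ℂ => pser c2 (t' * s)) (pser c3 (t * s) * s) t :=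
    by have h := (HD (t * s)).comp t h1; exact h
  have hfull : HasDerivAt
      (fun t' : ℂ => 2 * t' * pser c1 (t' * s) + pser c1 (t' * s)
          + (t' + s) * t' * pser c2 (t' * s))
      ((2 * 1 * pser c1 (t * s) + 2 * t * (pser c2 (t * s) * s)) + pser c2 (t * s) * s
        + ((1 * t + (t + s) * 1) * pser c2 (t * s) + (t + s) * t * (pser c3 (t * s) * s))) t := by
    exact ((((hasDerivAt_id t).const_mul 2).mul hC').add hC').add
      ((((hasDerivAt_id t).add_const s).mul (hasDerivAt_id t)).mul hD')
  rw [hrw, hfull.deriv, contBinom_eq]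
  linear_combination 2 * I1 (t * s) + (t + s) * I2 (t * s)
end

section
/- Let k₁, k₂ ∈ ℕ, λ, K ∈ ℝ, r ∈ ℕ, a, b > 0, and let f : ℝ → ℝ be differentiable with continuous derivative. Define I₀(a,b) = λ a^{k₁} b^{k₂}/(k₁! k₂!) and recursively I_m(a,b) = ∫₀ᵃ∫₀ᵇ I_{m-1}(x,y) dy dx + (b^{m+r}/(r+m)!) ∫₀ᵃ (x^{m-1}/(m-1)!) f'(K+x) dx for m ≥ 1. Then for all m ≥ 1, I_m(a,b) = λ a^{k₁+m} b^{k₂+m}/((k₁+m)!(k₂+m)!) + (a^{m-1}/(m-1)!)(b^{m+r}/(m+r)!)(f(K+a) − f(K)). -/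
open intervalIntegral MeasureTheory

lemma int_pow_fact (n : ℕ) (b : ℝ) :
    ∫ y in (0:ℝ)..b, y ^ n / (Nat.factorial n : ℝ) =
      b ^ (n + 1) / (Nat.factorial (n + 1) : ℝ) := by
  rw [intervalIntegral.integral_div, integral_pow]
  have h1 : (Nat.factorial n : ℝ) ≠ 0 := Nat.cast_ne_zero.mpr n.factorial_ne_zero
  have h2 : ((n:ℝ) + 1) ≠ 0 := by positivity
  rw [Nat.factorial_succ]
  push_cast
  field_simp
  simp

lemma int_cmul_pow_fact (n : ℕ) (c b : ℝ) :
    ∫ y in (0:ℝ)..b, c * (y ^ n / (Nat.factorial n : ℝ)) =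
      c * (b ^ (n + 1) / (Nat.factorial (n + 1) : ℝ)) := by
  rw [intervalIntegral.integral_const_mul, int_pow_fact]

lemma ftc_shift (f : ℝ → ℝ) (hf : Differentiable ℝ f) (hf' : Continuous (deriv f))
    (K a : ℝ) :
    ∫ x in (0:ℝ)..a, deriv f (K + x) = f (K + a) - f K := by
  have h : ∀ x ∈ Set.uIcc (0:ℝ) a, HasDerivAt (fun x => f (K + x)) (deriv f (K + x)) x := by
    intro x _
    have := ((hf (K + x)).hasDerivAt).comp x ((hasDerivAt_id x).const_add K)
    simp only [mul_one] at this
    exact this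
  have := intervalIntegral.integral_eq_sub_of_hasDerivAt h
    ((hf'.comp (continuous_const.add continuous_id)).intervalIntegrable 0 a)
  simpa using this

lemma ftc_aux (f : ℝ → ℝ) (hf : Differentiable ℝ f) (hf' : Continuous (deriv f))
    (K a : ℝ) (m : ℕ) :
    ∫ x in (0:ℝ)..a,
        (x ^ m / (Nat.factorial m : ℝ) * (f (K + x) - f K) +
          x ^ (m + 1) / (Nat.factorial (m + 1) : ℝ) * deriv f (K + x)) =
      a ^ (m + 1) / (Nat.factorial (m + 1) : ℝ) * (f (K + a) - f K) := by
  have h : ∀ x ∈ Set.uIcc (0:ℝ) a,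
      HasDerivAt (fun x => x ^ (m + 1) / (Nat.factorial (m + 1) : ℝ) * (f (K + x) - f K))
        (x ^ m / (Nat.factorial m : ℝ) * (f (K + x) - f K) +
          x ^ (m + 1) / (Nat.factorial (m + 1) : ℝ) * deriv f (K + x)) x := by
    intro x _
    have h1 : HasDerivAt (fun x : ℝ => x ^ (m + 1) / (Nat.factorial (m + 1) : ℝ))
        (x ^ m / (Nat.factorial m : ℝ)) x := by
      have := (hasDerivAt_pow (m + 1) x).div_const (Nat.factorial (m + 1) : ℝ)
      refine this.congr_deriv ?_
      rw [Nat.factorial_succ]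
      have h1 : (Nat.factorial m : ℝ) ≠ 0 := Nat.cast_ne_zero.mpr m.factorial_ne_zero
      push_cast
      field_simp
    have h2 : HasDerivAt (fun x => f (K + x) - f K) (deriv f (K + x)) x := by
      have := ((hf (K + x)).hasDerivAt).comp x ((hasDerivAt_id x).const_add K)
      simpa using this.sub_const (f K)
    exact h1.mul h2
  have hint : IntervalIntegrable
      (fun x => x ^ m / (Nat.factorial m : ℝ) * (f (K + x) - f K) +
        x ^ (m + 1) / (Nat.factorial (m + 1) : ℝ) * deriv f (K + x)) volume 0 a := by
    apply Continuous.intervalIntegrable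
    have hc : Continuous fun x : ℝ => f (K + x) :=
      hf.continuous.comp (continuous_const.add continuous_id)
    have hc' : Continuous fun x : ℝ => deriv f (K + x) :=
      hf'.comp (continuous_const.add continuous_id)
    exact (((continuous_pow m).div_const _).mul (hc.sub continuous_const)).add
      (((continuous_pow (m + 1)).div_const _).mul hc')
  have := intervalIntegral.integral_eq_sub_of_hasDerivAt h hint
  simpa using this

theorem recurrence_integral (k₁ k₂ : ℕ) (lam K : ℝ) (r : ℕ) (f : ℝ → ℝ)
    (hf : Differentiable ℝ f) (hf' : Continuous (deriv f))
    (I : ℕ → ℝ → ℝ → ℝ)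
    (hI0 : ∀ a b : ℝ, I 0 a b =
      lam * a ^ k₁ * b ^ k₂ / ((Nat.factorial k₁ : ℝ) * (Nat.factorial k₂ : ℝ)))
    (hIrec : ∀ (m : ℕ) (a b : ℝ), I (m + 1) a b =
      (∫ x in (0:ℝ)..a, ∫ y in (0:ℝ)..b, I m x y) +
        b ^ (m + 1 + r) / (Nat.factorial (r + m + 1) : ℝ) *
          ∫ x in (0:ℝ)..a, x ^ m / (Nat.factorial m : ℝ) * deriv f (K + x)) :
    ∀ (m : ℕ) (a b : ℝ), 0 < a → 0 < b →
      I (m + 1) a b =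
        lam * a ^ (k₁ + m + 1) * b ^ (k₂ + m + 1) /
            ((Nat.factorial (k₁ + m + 1) : ℝ) * (Nat.factorial (k₂ + m + 1) : ℝ)) +
          a ^ m / (Nat.factorial m : ℝ) * (b ^ (m + 1 + r) / (Nat.factorial (m + 1 + r) : ℝ)) *
            (f (K + a) - f K) := by
  have hcf : Continuous fun x : ℝ => f (K + x) :=
    hf.continuous.comp (continuous_const.add continuous_id)
  intro m
  induction m with
  | zero =>
    intro a b ha hb
    rw [hIrec 0 a b]
    have hinner : ∀ x : ℝ, (∫ y in (0:ℝ)..b, I 0 x y) =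
        lam * x ^ k₁ / (Nat.factorial k₁ : ℝ) *
          (b ^ (k₂ + 1) / (Nat.factorial (k₂ + 1) : ℝ)) := by
      intro x
      have h1 : (∫ y in (0:ℝ)..b, I 0 x y) =
          ∫ y in (0:ℝ)..b, (lam * x ^ k₁ / (Nat.factorial k₁ : ℝ)) *
            (y ^ k₂ / (Nat.factorial k₂ : ℝ)) := by
        apply intervalIntegral.integral_congr
        intro y _
        rw [hI0 x y]; ring
      rw [h1, int_cmul_pow_fact]
    have houter : (∫ x in (0:ℝ)..a, ∫ y in (0:ℝ)..b, I 0 x y) =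
        (lam * (b ^ (k₂ + 1) / (Nat.factorial (k₂ + 1) : ℝ))) *
          (a ^ (k₁ + 1) / (Nat.factorial (k₁ + 1) : ℝ)) := by
      have h1 : (∫ x in (0:ℝ)..a, ∫ y in (0:ℝ)..b, I 0 x y) =
          ∫ x in (0:ℝ)..a, (lam * (b ^ (k₂ + 1) / (Nat.factorial (k₂ + 1) : ℝ))) *
            (x ^ k₁ / (Nat.factorial k₁ : ℝ)) := by
        apply intervalIntegral.integral_congr
        intro x _
        dsimp only
        rw [hinner x]; ring
      rw [h1, int_cmul_pow_fact]
    have hftc : (∫ x in (0:ℝ)..a, x ^ 0 / (Nat.factorial 0 : ℝ) * deriv f (K + x)) =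
        f (K + a) - f K := by
      have h1 : (∫ x in (0:ℝ)..a, x ^ 0 / (Nat.factorial 0 : ℝ) * deriv f (K + x)) =
          ∫ x in (0:ℝ)..a, deriv f (K + x) := by
        apply intervalIntegral.integral_congr
        intro x _
        simp
      rw [h1, ftc_shift f hf hf' K a]
    rw [houter, hftc]
    have e1 : r + 0 + 1 = 0 + 1 + r := by omega
    rw [e1]
    simp only [pow_zero, Nat.factorial_zero, Nat.cast_one]
    ring
  | succ m ih =>
    intro a b ha hb
    rw [hIrec (m + 1) a b]
    have hinner : ∀ x : ℝ, 0 < x → (∫ y in (0:ℝ)..b, I (m + 1) x y) =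
        lam * x ^ (k₁ + m + 1) / (Nat.factorial (k₁ + m + 1) : ℝ) *
          (b ^ (k₂ + m + 2) / (Nat.factorial (k₂ + m + 2) : ℝ)) +
        (x ^ m / (Nat.factorial m : ℝ) * (f (K + x) - f K)) *
          (b ^ (m + 1 + r + 1) / (Nat.factorial (m + 1 + r + 1) : ℝ)) := by
      intro x hx
      have h1 : (∫ y in (0:ℝ)..b, I (m + 1) x y) =
          ∫ y in (0:ℝ)..b,
            ((lam * x ^ (k₁ + m + 1) / (Nat.factorial (k₁ + m + 1) : ℝ)) *
              (y ^ (k₂ + m + 1) / (Nat.factorial (k₂ + m + 1) : ℝ)) +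
             (x ^ m / (Nat.factorial m : ℝ) * (f (K + x) - f K)) *
              (y ^ (m + 1 + r) / (Nat.factorial (m + 1 + r) : ℝ))) := by
        apply intervalIntegral.integral_congr_ae
        filter_upwards with y hy
        rw [Set.uIoc_of_le hb.le] at hy
        rw [ih x y hx hy.1]; ring
      rw [h1, intervalIntegral.integral_add, int_cmul_pow_fact, int_cmul_pow_fact]
      · apply Continuous.intervalIntegrable
        exact continuous_const.mul ((continuous_pow _).div_const _)
      · apply Continuous.intervalIntegrable
        exact continuous_const.mul ((continuous_pow _).div_const _)
    have houter : (∫ x in (0:ℝ)..a, ∫ y in (0:ℝ)..b, I (m + 1) x y) =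
        (lam * (b ^ (k₂ + m + 2) / (Nat.factorial (k₂ + m + 2) : ℝ))) *
          (a ^ (k₁ + m + 2) / (Nat.factorial (k₁ + m + 2) : ℝ)) +
        (b ^ (m + 1 + r + 1) / (Nat.factorial (m + 1 + r + 1) : ℝ)) *
          ∫ x in (0:ℝ)..a, x ^ m / (Nat.factorial m : ℝ) * (f (K + x) - f K) := by
      have h1 : (∫ x in (0:ℝ)..a, ∫ y in (0:ℝ)..b, I (m + 1) x y) =
          ∫ x in (0:ℝ)..a,
            ((lam * (b ^ (k₂ + m + 2) / (Nat.factorial (k₂ + m + 2) : ℝ))) *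
              (x ^ (k₁ + m + 1) / (Nat.factorial (k₁ + m + 1) : ℝ)) +
             (b ^ (m + 1 + r + 1) / (Nat.factorial (m + 1 + r + 1) : ℝ)) *
              (x ^ m / (Nat.factorial m : ℝ) * (f (K + x) - f K))) := by
        apply intervalIntegral.integral_congr_ae
        filter_upwards with x hx
        rw [Set.uIoc_of_le ha.le] at hx
        rw [hinner x hx.1]; ring
      rw [h1, intervalIntegral.integral_add, int_cmul_pow_fact,
        intervalIntegral.integral_const_mul]
      · apply Continuous.intervalIntegrable
        exact continuous_const.mul ((continuous_pow _).div_const _)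
      · apply Continuous.intervalIntegrable
        exact continuous_const.mul (((continuous_pow _).div_const _).mul
          (hcf.sub continuous_const))
    rw [houter]
    have hsum : (∫ x in (0:ℝ)..a, x ^ m / (Nat.factorial m : ℝ) * (f (K + x) - f K)) +
        (∫ x in (0:ℝ)..a, x ^ (m + 1) / (Nat.factorial (m + 1) : ℝ) * deriv f (K + x)) =
        a ^ (m + 1) / (Nat.factorial (m + 1) : ℝ) * (f (K + a) - f K) := by
      rw [← intervalIntegral.integral_add]
      · exact ftc_aux f hf hf' K a m
      · apply Continuous.intervalIntegrable
        exact ((continuous_pow _).div_const _).mul (hcf.sub continuous_const)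
      · apply Continuous.intervalIntegrable
        exact ((continuous_pow _).div_const _).mul
          (hf'.comp (continuous_const.add continuous_id))
    have e1 : r + (m + 1) + 1 = m + 1 + r + 1 := by omega
    have e2 : m + 1 + 1 + r = m + 1 + r + 1 := by omega
    have e3 : k₁ + (m + 1) + 1 = k₁ + m + 2 := by omega
    have e4 : k₂ + (m + 1) + 1 = k₂ + m + 2 := by omega
    rw [e1, e2, e3, e4]
    linear_combination (b ^ (m + 1 + r + 1) / (Nat.factorial (m + 1 + r + 1) : ℝ)) * hsum
end

section
/- Let f : ℝ → ℝ be differentiable. Then f satisfies ((x₁ − x₀)/2)(f'(x₁) + f'(x₀)) = f(x₁) − f(x₀) for all x₀, x₁ ∈ ℝ if and only if f is a quadratic polynomial, i.e., f(x) = ax² + bx + c for some constants a, b, c ∈ ℝ. -/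
theorem trapezoid_exact_iff_quadratic (f : ℝ → ℝ) (hf : Differentiable ℝ f) :
    (∀ x₀ x₁ : ℝ, (x₁ - x₀) / 2 * (deriv f x₁ + deriv f x₀) = f x₁ - f x₀) ↔
      ∃ a b c : ℝ, ∀ x : ℝ, f x = a * x ^ 2 + b * x + c := by
  constructor
  · intro H
    set d0 := deriv f 0 with hd0
    set d1 := deriv f 1 with hd1
    have hg : ∀ y : ℝ, deriv f y = d0 + y * (d1 - d0) := by
      intro y
      linear_combination 2 * (H 0 y) + 2 * (H y 1) - 2 * (H 0 1)
    refine ⟨(d1 - d0) / 2, d0, f 0, ?_⟩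
    set p : ℝ → ℝ := fun x => f x - ((d1 - d0) / 2 * x ^ 2 + d0 * x) with hp
    have hpd : ∀ x : ℝ, HasDerivAt p 0 x := by
      intro x
      have h1 : HasDerivAt (fun x : ℝ => (d1 - d0) / 2 * x ^ 2 + d0 * x)
          ((d1 - d0) / 2 * (2 * x ^ 1) + d0 * 1) x := by
        exact ((hasDerivAt_pow 2 x).const_mul _).add ((hasDerivAt_id x).const_mul d0)
      have h2 : HasDerivAt f (deriv f x) x := (hf x).hasDerivAt
      have h3 := h2.sub h1
      have : deriv f x - ((d1 - d0) / 2 * (2 * x ^ 1) + d0 * 1) = 0 := by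
        rw [hg x]; ring
      rwa [this] at h3
    have hconst : ∀ x : ℝ, p x = p 0 := by
      intro x
      have := is_const_of_deriv_eq_zero (f := p)
        (fun x => (hpd x).differentiableAt) (fun x => (hpd x).deriv) x 0
      exact this
    intro x
    have := hconst x
    simp only [hp] at this
    nlinarith [this]
  · rintro ⟨a, b, c, hfab⟩
    have hfe : f = fun x => a * x ^ 2 + b * x + c := funext hfab
    have hd : ∀ x : ℝ, deriv f x = 2 * a * x + b := by
      intro x
      have h1 := (((hasDerivAt_pow 2 x).const_mul a).add
        ((hasDerivAt_id x).const_mul b)).add_const c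
      simp only [id, Pi.add_apply] at h1
      rw [hfe, h1.deriv]
      norm_num
      ring
    intro x₀ x₁
    rw [hd x₀, hd x₁, hfab x₀, hfab x₁]
    ring
end
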